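/- For i ≥ 1, the generating function M_i(t) = ∑_{n≥0} |M(i,n)| t^n of pairs of intersecting walks starting at heights 0 and 2i equals D(t)^i / (1 − 4t), where D(t) = C(t) − 1. -/

import Mathlib

open PowerSeries Finset

/-- Generating function of the Catalan numbers `C_n = (1/(n+1))·binom(2n,n)`. -/
noncomputable def catGF : PowerSeries ℚ :=
  PowerSeries.mk fun n => (Nat.choose (2 * n) n : ℚ) / (n + 1)

/-- `D(t) = C(t) - 1`. -/
noncomputable def DGF : PowerSeries ℚ := catGF - 1

/-- A lattice walk of length `n` with steps `±1`. -/
def IsWalk (n : ℕ) (L : Fin (n + 1) → ℤ) : Prop :=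
  ∀ k : Fin n, |L k.succ - L k.castSucc| = 1

/-- Two walks intersect (share a common point at the same time). -/
def Meets {m : ℕ} (L L' : Fin m → ℤ) : Prop := ∃ k, L k = L' k

/-- All triples of walks of length `n` starting at heights `0, 2i, 2i+2j`. -/
def USet (i j n : ℕ) :
    Set ((Fin (n + 1) → ℤ) × (Fin (n + 1) → ℤ) × (Fin (n + 1) → ℤ)) :=
  {T | IsWalk n T.1 ∧ IsWalk n T.2.1 ∧ IsWalk n T.2.2 ∧
    T.1 0 = 0 ∧ T.2.1 0 = 2 * i ∧ T.2.2 0 = 2 * i + 2 * j}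

/-- Triples where `L₁` and `L₂` are nonintersecting. -/
def W12Set (i j n : ℕ) := {T ∈ USet i j n | ¬ Meets T.1 T.2.1}

/-- Triples where `L₂` and `L₃` are nonintersecting. -/
def W23Set (i j n : ℕ) := {T ∈ USet i j n | ¬ Meets T.2.1 T.2.2}

/-- Triples where `L₁` intersects `L₃`. -/
def M13Set (i j n : ℕ) := {T ∈ USet i j n | Meets T.1 T.2.2}

/-- Triples where `L₂` intersects both `L₁` and `L₃`. -/
def M1223Set (i j n : ℕ) :=
  {T ∈ USet i j n | Meets T.2.1 T.1 ∧ Meets T.2.1 T.2.2}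

/-- Vicious (pairwise nonintersecting) triples. -/
def VSet (i j n : ℕ) :=
  {T ∈ USet i j n | ¬ Meets T.1 T.2.1 ∧ ¬ Meets T.2.1 T.2.2 ∧ ¬ Meets T.1 T.2.2}

/-- Pairs of walks of length `n` starting at heights `0` and `2i`. -/
def PairSet (i n : ℕ) : Set ((Fin (n + 1) → ℤ) × (Fin (n + 1) → ℤ)) :=
  {P | IsWalk n P.1 ∧ IsWalk n P.2 ∧ P.1 0 = 0 ∧ P.2 0 = 2 * i}

/-- Intersecting pairs. -/
def MSet (i n : ℕ) := {P ∈ PairSet i n | Meets P.1 P.2}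

/-- Nonintersecting (vicious) pairs. -/
def NSet (i n : ℕ) := {P ∈ PairSet i n | ¬ Meets P.1 P.2}

/-- Converging pairs: never meet before time `n`, meet at time `n`. -/
def TSet (i n : ℕ) :=
  {P ∈ PairSet i n | (∀ k : Fin (n + 1), (k : ℕ) < n → P.1 k ≠ P.2 k) ∧
    P.1 (Fin.last n) = P.2 (Fin.last n)}

/-- 2-watermelons of length `n`. -/
def MelonSet (n : ℕ) : Set ((Fin (n + 1) → ℤ) × (Fin (n + 1) → ℤ)) :=
  {P | IsWalk n P.1 ∧ IsWalk n P.2 ∧ P.1 0 = 0 ∧ P.2 0 = 2 ∧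
    P.2 (Fin.last n) = P.1 (Fin.last n) + 2 ∧ ∀ k, P.1 k < P.2 k}

/-- Partial Dyck paths of length `2n` from height `2i` to `0`, strictly positive before the end. -/
def PDyckSet (i n : ℕ) : Set (Fin (2 * n + 1) → ℤ) :=
  {Q | IsWalk (2 * n) Q ∧ Q 0 = 2 * i ∧ Q (Fin.last (2 * n)) = 0 ∧
    ∀ k : Fin (2 * n + 1), (k : ℕ) < 2 * n → 0 < Q k}


namespace Aux12

def stp (b : Bool) : ℤ := if b then 1 else -1

def WalkSet (a : ℤ) (n : ℕ) : Set (Fin (n+1) → ℤ) := {L | IsWalk n L ∧ L 0 = a}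

lemma isWalk_tail {n : ℕ} {L : Fin (n+2) → ℤ} (h : IsWalk (n+1) L) : IsWalk n (Fin.tail L) := by
  intro k
  simpa [Fin.tail, ← Fin.succ_castSucc] using h k.succ

lemma isWalk_cons {n : ℕ} {L : Fin (n+1) → ℤ} {a : ℤ} (h : IsWalk n L) (h1 : |L 0 - a| = 1) :
    IsWalk (n+1) (Fin.cons a L) := by
  intro k
  induction k using Fin.cases with
  | zero => simpa using h1
  | succ j => simpa [← Fin.succ_castSucc] using h j

lemma walk_zero_one {n : ℕ} {L : Fin (n+2) → ℤ} (h : IsWalk (n+1) L) :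
    L 1 = L 0 + 1 ∨ L 1 = L 0 - 1 := by
  have h0 := h 0
  simp only [Fin.succ_zero_eq_one, Fin.castSucc_zero] at h0
  rcases (abs_eq (by norm_num)).mp h0 with h | h
  · left; omega
  · right; omega

-- the sub-piece of WalkSet with prescribed value at time 1
def WS1 (a c : ℤ) (n : ℕ) : Set (Fin (n+2) → ℤ) := {L ∈ WalkSet a (n+1) | L 1 = c}

lemma tail_injOn (a : ℤ) (n : ℕ) :
    Set.InjOn Fin.tail {L : Fin (n+2) → ℤ | L 0 = a} := by
  intro L hL M hM h
  have : Fin.cons (L 0) (Fin.tail L) = Fin.cons (M 0) (Fin.tail M) := by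
    rw [hL, hM, h]
  rwa [Fin.cons_self_tail, Fin.cons_self_tail] at this

lemma cons_one {n : ℕ} (a : ℤ) (L : Fin (n+1) → ℤ) :
    (Fin.cons a L : Fin (n+2) → ℤ) 1 = L 0 := by
  have : (1 : Fin (n+2)) = Fin.succ 0 := by simp
  rw [this, Fin.cons_succ]

lemma tail_image_ws (a c : ℤ) (n : ℕ) (hc : |c - a| = 1) :
    Fin.tail '' WS1 a c n = WalkSet c n := by
  ext Q
  constructor
  · rintro ⟨L, ⟨⟨hw, h0⟩, h1⟩, rfl⟩
    exact ⟨isWalk_tail hw, by simpa [Fin.tail] using h1⟩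
  · rintro ⟨hw, h0⟩
    refine ⟨Fin.cons a Q, ⟨⟨isWalk_cons hw (by rw [h0]; exact hc), by simp⟩, ?_⟩, by rw [Fin.tail_cons]⟩
    rw [cons_one, h0]

lemma walkset_card : ∀ n, ∀ a : ℤ, (WalkSet a n).Finite ∧ (WalkSet a n).ncard = 2^n := by
  intro n
  induction n with
  | zero =>
    intro a
    have : WalkSet a 0 = {fun _ => a} := by
      ext L
      constructor
      · rintro ⟨-, h0⟩
        funext k
        have : k = 0 := Fin.ext (by omega)
        simp [this, h0]
      · rintro rfl
        exact ⟨fun k => k.elim0, rfl⟩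
    rw [this]; exact ⟨Set.finite_singleton _, Set.ncard_singleton _⟩
  | succ n ih =>
    intro a
    have hsplit : WalkSet a (n+1) = WS1 a (a+1) n ∪ WS1 a (a-1) n := by
      ext L
      constructor
      · intro hL
        rcases walk_zero_one hL.1 with h | h
        · left; exact ⟨hL, by rw [h, hL.2]⟩
        · right; exact ⟨hL, by rw [h, hL.2]⟩
      · rintro (h | h) <;> exact h.1
    have key : ∀ c : ℤ, |c - a| = 1 → (WS1 a c n).Finite ∧ (WS1 a c n).ncard = 2^n := by
      intro c hc
      have him := tail_image_ws a c n hc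
      have hinj : Set.InjOn Fin.tail (WS1 a c n) := by
        apply (tail_injOn a n).mono
        rintro L ⟨⟨-, h0⟩, -⟩; exact h0
      constructor
      · exact Set.Finite.of_finite_image (him ▸ (ih c).1) hinj
      · rw [← Set.ncard_image_of_injOn hinj, him, (ih c).2]
    have h1 := key (a+1) (by simp)
    have h2 := key (a-1) (by simp)
    have hdisj : Disjoint (WS1 a (a+1) n) (WS1 a (a-1) n) := by
      rw [Set.disjoint_left]
      rintro L ⟨-, e1⟩ ⟨-, e2⟩
      omega
    constructor
    · rw [hsplit]; exact h1.1.union h2.1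
    · rw [hsplit, Set.ncard_union_eq hdisj h1.1 h2.1, h1.2, h2.2]; ring

/-! ### GSet lemmas -/

def GSet (a b : ℤ) (n : ℕ) : Set ((Fin (n+1) → ℤ) × (Fin (n+1) → ℤ)) :=
  {P | IsWalk n P.1 ∧ IsWalk n P.2 ∧ P.1 0 = a ∧ P.2 0 = b ∧ Meets P.1 P.2}

lemma meets_cons_iff {n : ℕ} {a b : ℤ} (hab : a ≠ b) (L M : Fin (n+1) → ℤ) :
    Meets (Fin.cons a L : Fin (n+2) → ℤ) (Fin.cons b M) ↔ Meets L M := by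
  constructor
  · rintro ⟨k, hk⟩
    induction k using Fin.cases with
    | zero => simp at hk; exact absurd hk hab
    | succ j => exact ⟨j, by simpa using hk⟩
  · rintro ⟨k, hk⟩; exact ⟨k.succ, by simpa using hk⟩

lemma gset_subset (a b : ℤ) (n : ℕ) : GSet a b n ⊆ (WalkSet a n) ×ˢ (WalkSet b n) := by
  rintro P ⟨w1, w2, s1, s2, -⟩
  exact ⟨⟨w1, s1⟩, ⟨w2, s2⟩⟩

lemma gset_finite (a b : ℤ) (n : ℕ) : (GSet a b n).Finite :=
  Set.Finite.subset (((walkset_card n a).1).prod ((walkset_card n b).1)) (gset_subset a b n)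

lemma gset_diag (a : ℤ) (n : ℕ) : GSet a a n = (WalkSet a n) ×ˢ (WalkSet a n) := by
  apply Set.Subset.antisymm (gset_subset a a n)
  rintro P ⟨⟨w1, s1⟩, ⟨w2, s2⟩⟩
  exact ⟨w1, w2, s1, s2, ⟨0, by rw [s1, s2]⟩⟩

lemma gset_diag_card (a : ℤ) (n : ℕ) : (GSet a a n).ncard = 4^n := by
  rw [gset_diag, ← Nat.card_coe_set_eq, Nat.card_congr (Equiv.Set.prod _ _), Nat.card_prod,
    Nat.card_coe_set_eq, (walkset_card n a).2]
  rw [← mul_pow]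
  norm_num

lemma gset_empty {a b : ℤ} (hab : a ≠ b) (n : ℕ) (hn : n = 0) : GSet a b n = ∅ := by
  subst hn
  ext P
  simp only [Set.mem_empty_iff_false, iff_false]
  rintro ⟨-, -, s1, s2, k, hk⟩
  have : k = 0 := Fin.ext (by omega)
  rw [this, s1, s2] at hk
  exact hab hk

/-- translation invariance -/
lemma gset_translate (a b c : ℤ) (n : ℕ) :
    (GSet (a+c) (b+c) n).ncard = (GSet a b n).ncard := by
  have himg : (fun P : (Fin (n+1) → ℤ) × (Fin (n+1) → ℤ) =>
      ((fun k => P.1 k + c), (fun k => P.2 k + c))) '' GSet a b n = GSet (a+c) (b+c) n := by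
    ext Q
    constructor
    · rintro ⟨P, ⟨w1, w2, s1, s2, k, hk⟩, rfl⟩
      refine ⟨fun j => by simpa using w1 j, fun j => by simpa using w2 j,
        by simp [s1], by simp [s2], ⟨k, by simp [hk]⟩⟩
    · rintro ⟨w1, w2, s1, s2, k, hk⟩
      refine ⟨((fun j => Q.1 j - c), (fun j => Q.2 j - c)),
        ⟨fun j => by simpa using w1 j, fun j => by simpa using w2 j,
          by simp [s1], by simp [s2], ⟨k, by simp at hk ⊢; omega⟩⟩, ?_⟩
      simp
  have hinj : Set.InjOn (fun P : (Fin (n+1) → ℤ) × (Fin (n+1) → ℤ) =>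
      ((fun k => P.1 k + c), (fun k => P.2 k + c))) (GSet a b n) := by
    rintro P - Q - h
    simp only [Prod.mk.injEq] at h
    ext j
    · have := congrFun h.1 j; simp at this; omega
    · have := congrFun h.2 j; simp at this; omega
  rw [← himg, Set.ncard_image_of_injOn hinj]

/-! ### decapitation -/

def GS1 (a b c d : ℤ) (n : ℕ) : Set ((Fin (n+2) → ℤ) × (Fin (n+2) → ℤ)) :=
  {P ∈ GSet a b (n+1) | P.1 1 = c ∧ P.2 1 = d}

def tl (n : ℕ) (P : (Fin (n+2) → ℤ) × (Fin (n+2) → ℤ)) :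
    (Fin (n+1) → ℤ) × (Fin (n+1) → ℤ) := (Fin.tail P.1, Fin.tail P.2)

lemma tail_image_gs {a b c d : ℤ} (hab : a ≠ b) (hc : |c - a| = 1) (hd : |d - b| = 1) (n : ℕ) :
    tl n '' GS1 a b c d n = GSet c d n := by
  ext Q
  constructor
  · rintro ⟨P, ⟨⟨w1, w2, s1, s2, m⟩, h1, h2⟩, rfl⟩
    refine ⟨isWalk_tail w1, isWalk_tail w2, by simpa [tl, Fin.tail] using h1,
      by simpa [tl, Fin.tail] using h2, ?_⟩
    have m' : Meets (Fin.cons a (Fin.tail P.1) : Fin (n+2) → ℤ) (Fin.cons b (Fin.tail P.2)) := by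
      rw [← s1, ← s2, Fin.cons_self_tail, Fin.cons_self_tail]
      exact m
    exact (meets_cons_iff hab _ _).mp m'
  · rintro ⟨w1, w2, q1, q2, m⟩
    refine ⟨(Fin.cons a Q.1, Fin.cons b Q.2),
      ⟨⟨isWalk_cons w1 (by rw [q1]; exact hc), isWalk_cons w2 (by rw [q2]; exact hd),
        by simp, by simp, (meets_cons_iff hab _ _).mpr m⟩,
        (cons_one a Q.1).trans q1, (cons_one b Q.2).trans q2⟩, ?_⟩
    simp only [tl, Fin.tail_cons]

lemma tl_injOn {a b c d : ℤ} (n : ℕ) : Set.InjOn (tl n) (GS1 a b c d n) := by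
  rintro P ⟨⟨-, -, s1, s2, -⟩, -⟩ Q ⟨⟨-, -, t1, t2, -⟩, -⟩ h
  simp only [tl, Prod.mk.injEq] at h
  have e1 : P.1 = Q.1 := tail_injOn a n (by exact s1) (by exact t1) h.1
  have e2 : P.2 = Q.2 := tail_injOn b n (by exact s2) (by exact t2) h.2
  exact Prod.ext e1 e2

lemma gs1_card {a b c d : ℤ} (hab : a ≠ b) (hc : |c - a| = 1) (hd : |d - b| = 1) (n : ℕ) :
    (GS1 a b c d n).ncard = (GSet c d n).ncard := by
  rw [← tail_image_gs hab hc hd n, Set.ncard_image_of_injOn (tl_injOn n)]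

lemma gs1_finite (a b c d : ℤ) (n : ℕ) : (GS1 a b c d n).Finite :=
  (gset_finite a b (n+1)).subset (fun P hP => hP.1)

lemma gset_rec {a b : ℤ} (hab : a ≠ b) (n : ℕ) :
    (GSet a b (n+1)).ncard = (GSet (a+1) (b+1) n).ncard + (GSet (a+1) (b-1) n).ncard
      + (GSet (a-1) (b+1) n).ncard + (GSet (a-1) (b-1) n).ncard := by
  have habs : ∀ e : ℤ, |e + 1 - e| = 1 ∧ |e - 1 - e| = 1 := by intro e; constructor <;> simp
  have hsplit : GSet a b (n+1) =
      (GS1 a b (a+1) (b+1) n ∪ GS1 a b (a+1) (b-1) n)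
      ∪ (GS1 a b (a-1) (b+1) n ∪ GS1 a b (a-1) (b-1) n) := by
    ext P
    constructor
    · intro hP
      obtain ⟨w1, w2, s1, s2, -⟩ := id hP
      rcases walk_zero_one w1 with e1 | e1 <;> rcases walk_zero_one w2 with e2 | e2
      · exact Or.inl (Or.inl ⟨hP, by rw [e1, s1], by rw [e2, s2]⟩)
      · exact Or.inl (Or.inr ⟨hP, by rw [e1, s1], by rw [e2, s2]⟩)
      · exact Or.inr (Or.inl ⟨hP, by rw [e1, s1], by rw [e2, s2]⟩)
      · exact Or.inr (Or.inr ⟨hP, by rw [e1, s1], by rw [e2, s2]⟩)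
    · rintro ((h | h) | (h | h)) <;> exact h.1
  have d1 : Disjoint (GS1 a b (a+1) (b+1) n) (GS1 a b (a+1) (b-1) n) := by
    rw [Set.disjoint_left]; rintro P ⟨-, -, e1⟩ ⟨-, -, e2⟩; omega
  have d2 : Disjoint (GS1 a b (a-1) (b+1) n) (GS1 a b (a-1) (b-1) n) := by
    rw [Set.disjoint_left]; rintro P ⟨-, -, e1⟩ ⟨-, -, e2⟩; omega
  have d3 : Disjoint (GS1 a b (a+1) (b+1) n ∪ GS1 a b (a+1) (b-1) n)
      (GS1 a b (a-1) (b+1) n ∪ GS1 a b (a-1) (b-1) n) := by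
    rw [Set.disjoint_left]
    rintro P (⟨-, e1, -⟩ | ⟨-, e1, -⟩) (⟨-, e2, -⟩ | ⟨-, e2, -⟩) <;> omega
  rw [hsplit,
    Set.ncard_union_eq d3 ((gs1_finite _ _ _ _ _).union (gs1_finite _ _ _ _ _))
      ((gs1_finite _ _ _ _ _).union (gs1_finite _ _ _ _ _)),
    Set.ncard_union_eq d1 (gs1_finite _ _ _ _ _) (gs1_finite _ _ _ _ _),
    Set.ncard_union_eq d2 (gs1_finite _ _ _ _ _) (gs1_finite _ _ _ _ _),
    gs1_card hab (habs a).1 (habs b).1, gs1_card hab (habs a).1 (habs b).2,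
    gs1_card hab (habs a).2 (habs b).1, gs1_card hab (habs a).2 (habs b).2]
  ring

lemma catGF_eq : catGF = PowerSeries.mk fun n => (catalan n : ℚ) := by
  unfold catGF
  ext n
  rw [coeff_mk, coeff_mk, catalan_eq_centralBinom_div,
    Nat.cast_div (Nat.succ_dvd_centralBinom n) (by exact_mod_cast Nat.succ_ne_zero n),
    Nat.centralBinom]
  push_cast
  ring

lemma catGF_fe : catGF = 1 + X * catGF ^ 2 := by
  rw [catGF_eq]
  ext n
  rcases n with _ | n
  · simp [catalan_zero]
  · rw [map_add, PowerSeries.coeff_succ_X_mul, coeff_one, if_neg (Nat.succ_ne_zero n), zero_add,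
      sq, PowerSeries.coeff_mul]
    simp only [coeff_mk]
    rw [catalan_succ']
    push_cast
    rfl

lemma one_add_DGF : (1 : PowerSeries ℚ) + DGF = catGF := by
  unfold DGF; ring

lemma DGF_fe : DGF = X * (1 + DGF) ^ 2 := by
  rw [one_add_DGF]
  unfold DGF
  nth_rewrite 1 [catGF_fe]
  ring

lemma constantCoeff_DGF : constantCoeff DGF = 0 := by
  unfold DGF
  rw [map_sub, ← coeff_zero_eq_constantCoeff, catGF_eq, coeff_mk]
  simp

noncomputable def geo : PowerSeries ℚ := PowerSeries.mk fun n => (4:ℚ)^n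

lemma geo_eq : (1 - 4 * X : PowerSeries ℚ)⁻¹ = geo := by
  rw [PowerSeries.inv_eq_iff_mul_eq_one]
  · ext n
    rcases n with _ | n
    · simp [geo]
    · rw [mul_sub, mul_one, map_sub, coeff_one, if_neg (Nat.succ_ne_zero n)]
      have : geo * (4 * X) = (4 * geo) * X := by ring
      rw [this, PowerSeries.coeff_succ_mul_X, geo, ← map_ofNat (C (R := ℚ)) 4, coeff_C_mul]
      simp [coeff_mk, pow_succ]
      ring
  · simp

lemma gset_card_eq (a b a' b' : ℤ) (n : ℕ) (h : b - a = b' - a') :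
    (GSet a b n).ncard = (GSet a' b' n).ncard := by
  calc (GSet a b n).ncard = (GSet (a' + (a - a')) (b' + (a - a')) n).ncard := by
        rw [show a' + (a - a') = a by ring, show b' + (a - a') = b by omega]
  _ = (GSet a' b' n).ncard := gset_translate a' b' (a - a') n

lemma key : ∀ n : ℕ, ∀ i : ℕ, ((GSet 0 (2*(i:ℤ)) n).ncard : ℚ) = coeff n (DGF ^ i * geo) := by
  intro n
  induction n with
  | zero =>
    intro i
    rcases i with _ | j
    · rw [show ((2:ℤ)*((0:ℕ):ℤ)) = 0 by norm_num, gset_diag_card]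
      conv_rhs => rw [pow_zero, one_mul]
      rw [geo, coeff_mk]
      norm_num
    · rw [gset_empty (by push_cast; omega) 0 rfl, Set.ncard_empty, coeff_zero_eq_constantCoeff,
        map_mul, map_pow, constantCoeff_DGF, zero_pow (Nat.succ_ne_zero j), zero_mul]
      norm_num
  | succ n ih =>
    intro i
    rcases i with _ | j
    · rw [show ((2:ℤ)*((0:ℕ):ℤ)) = 0 by norm_num, gset_diag_card]
      conv_rhs => rw [pow_zero, one_mul]
      rw [geo, coeff_mk]
      push_cast
      ring
    · have hab : (0:ℤ) ≠ 2*(((j+1):ℕ):ℤ) := by push_cast; omega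
      rw [gset_rec hab]
      rw [gset_card_eq (0+1) (2*(((j+1):ℕ):ℤ)+1) 0 (2*(((j+1):ℕ):ℤ)) n (by ring),
        gset_card_eq (0+1) (2*(((j+1):ℕ):ℤ)-1) 0 (2*((j:ℕ):ℤ)) n (by push_cast; ring),
        gset_card_eq (0-1) (2*(((j+1):ℕ):ℤ)+1) 0 (2*(((j+2):ℕ):ℤ)) n (by push_cast; ring),
        gset_card_eq (0-1) (2*(((j+1):ℕ):ℤ)-1) 0 (2*(((j+1):ℕ):ℤ)) n (by push_cast; ring)]
      rw [Nat.cast_add, Nat.cast_add, Nat.cast_add, ih j, ih (j+1), ih (j+2)]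
      have hD : DGF ^ (j+1) * geo = X * (DGF^j * geo + (DGF^(j+1) * geo + DGF^(j+1) * geo)
          + DGF^(j+2) * geo) := by
        calc DGF ^ (j+1) * geo = DGF^j * DGF * geo := by ring
        _ = DGF^j * (X * (1+DGF)^2) * geo := by rw [← DGF_fe]
        _ = X * (DGF^j * geo + (DGF^(j+1) * geo + DGF^(j+1) * geo) + DGF^(j+2) * geo) := by ring
      conv_rhs => rw [hD]
      rw [PowerSeries.coeff_succ_X_mul, map_add, map_add, map_add]
      ring

lemma MSet_eq (i n : ℕ) : MSet i n = GSet 0 (2*(i:ℤ)) n := by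
  ext P
  simp only [MSet, PairSet, GSet, Set.mem_setOf_eq, Set.mem_sep_iff]
  tauto

end Aux12

theorem stmt12 (i : ℕ) (hi : 1 ≤ i) :
    PowerSeries.mk (fun n => (Nat.card (MSet i n) : ℚ)) =
      DGF ^ i * (1 - 4 * PowerSeries.X)⁻¹ := by
  ext n
  rw [coeff_mk, Aux12.geo_eq, Aux12.MSet_eq i n, Nat.card_coe_set_eq]
  exact Aux12.key n i
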